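/- For every natural number n, the standard n-dimensional simplex Δⁿ = { p : Fin (n+1) → ℝ | p i ≥ 0 for all i and Σᵢ p i = 1 }, equipped with the pointwise midpoint operation (p ⊕ q)(i) = (p i + q i)/2, is the midpoint-convex body freely generated by the (n+1)-element set: for every cancellative iterative midpoint set (A, m) and every function f : Fin (n+1) → A there is a unique midpoint homomorphism h : Δⁿ → A sending, for each i, the i-th vertex (the indicator function δᵢ) to f i. -/

import Mathlib

/-- A midpoint operation: idempotent, commutative, satisfying transposition. -/
def IsMidpoint {A : Type} (m : A → A → A) : Prop :=
  (∀ x, m x x = x) ∧ (∀ x y, m x y = m y x) ∧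
    (∀ x y z w, m (m x y) (m z w) = m (m x z) (m y w))

/-- Cancellation: `m x y = m x z` implies `y = z`. -/
def Cancellative {A : Type} (m : A → A → A) : Prop :=
  ∀ x y z, m x y = m x z → y = z

/-- Iterativity in the category of sets. -/
def Iterative {A : Type} (m : A → A → A) : Prop :=
  ∀ (X : Type) (c : X → A × X), ∃! u : X → A, ∀ x, u x = m (c x).1 (u (c x).2)

/-- The pointwise midpoint operation on the standard `n`-simplex. -/
noncomputable def simplexMid {n : ℕ} (p q : stdSimplex ℝ (Fin (n + 1))) :
    stdSimplex ℝ (Fin (n + 1)) :=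
  ⟨fun i => (p.1 i + q.1 i) / 2, by
    constructor
    · intro i
      have h1 := p.2.1 i; have h2 := q.2.1 i
      linarith
    · have h1 := p.2.2; have h2 := q.2.2
      rw [← Finset.sum_div, Finset.sum_add_distrib, h1, h2]
      norm_num⟩

/-- The `i`-th vertex of the standard `n`-simplex, i.e. the indicator `δᵢ`. -/
noncomputable def simplexVertex {n : ℕ} (i : Fin (n + 1)) : stdSimplex ℝ (Fin (n + 1)) :=
  ⟨fun j => if j = i then 1 else 0, by
    constructor
    · intro j
      by_cases h : j = i <;> simp [h]
    · simp⟩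

open Classical Finset

noncomputable section Dev

variable {n : ℕ} {A : Type}

/-- greedily take `t` units from the weight vector `w` -/
def takeW (w : Fin (n+1) → ℕ) : ℕ → Fin (n+1) → ℕ
  | 0 => fun _ => 0
  | t+1 =>
    let u := takeW w t
    if h : ∃ i, u i < w i then Function.update u h.choose (u h.choose + 1) else u

lemma takeW_le (w : Fin (n+1) → ℕ) : ∀ t i, takeW w t i ≤ w i := by
  intro t
  induction t with
  | zero => intro i; simp [takeW]
  | succ t ih =>
    intro i
    simp only [takeW]
    split
    next h =>
      rcases eq_or_ne i h.choose with rfl | hne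
      · rw [Function.update_self]; exact h.choose_spec
      · rw [Function.update_of_ne hne]; exact ih i
    next => exact ih i

lemma takeW_sum (w : Fin (n+1) → ℕ) : ∀ t, (∑ i, takeW w t i) = min t (∑ i, w i) := by
  intro t
  induction t with
  | zero => simp [takeW]
  | succ t ih =>
    simp only [takeW]
    split
    next h =>
      set c := h.choose with hc
      set g := Function.update (takeW w t) c (takeW w t c + 1) with hg
      have h1 : g c + ∑ k ∈ Finset.univ.erase c, g k = ∑ k, g k :=
        Finset.add_sum_erase Finset.univ g (Finset.mem_univ c)
      have h2 : (∑ k ∈ Finset.univ.erase c, g k) = ∑ k ∈ Finset.univ.erase c, takeW w t k :=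
        Finset.sum_congr rfl fun k hk => by
          rw [hg, Function.update_of_ne (Finset.ne_of_mem_erase hk)]
      have h3 : takeW w t c + ∑ k ∈ Finset.univ.erase c, takeW w t k = ∑ k, takeW w t k :=
        Finset.add_sum_erase Finset.univ (takeW w t) (Finset.mem_univ c)
      have h4 : g c = takeW w t c + 1 := by rw [hg, Function.update_self]
      have hlt : (∑ i, takeW w t i) < ∑ i, w i :=
        Finset.sum_lt_sum (fun i _ => takeW_le w t i) ⟨c, Finset.mem_univ _, h.choose_spec⟩
      omega
    next h =>
      push_neg at h
      have hsum : (∑ i, takeW w t i) = ∑ i, w i :=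
        Finset.sum_congr rfl fun i _ => le_antisymm (takeW_le w t i) (h i)
      omega

variable (m : A → A → A) (f : Fin (n+1) → A)

/-- evaluation of a dyadic weight vector (total weight `2^L`) in `A` -/
def Ey : ℕ → (Fin (n+1) → ℕ) → A
  | 0, w => f (if h : ∃ i, w i ≠ 0 then h.choose else 0)
  | L+1, w => m (Ey L (takeW w (2^L))) (Ey L (fun i => w i - takeW w (2^L) i))

lemma Ey_single (i : Fin (n+1)) : Ey m f 0 (fun j => if j = i then 1 else 0) = f i := by
  simp only [Ey]
  have h : ∃ j, (if j = i then (1:ℕ) else 0) ≠ 0 := ⟨i, by simp⟩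
  rw [dif_pos h]
  have hspec : (if h.choose = i then (1:ℕ) else 0) ≠ 0 := h.choose_spec
  congr 1
  by_contra hne
  rw [if_neg hne] at hspec
  exact hspec rfl

/-- move one unit from slot `i` to slot `j` -/
def mvW (u : Fin (n+1) → ℕ) (i j : Fin (n+1)) : Fin (n+1) → ℕ :=
  fun k => (u k + if k = j then 1 else 0) - (if k = i then 1 else 0)

lemma sum_erase_eq (g : Fin (n+1) → ℕ) (i : Fin (n+1)) :
    (∑ k ∈ Finset.univ.erase i, g k) = (∑ k, g k) - g i := by
  have := Finset.add_sum_erase Finset.univ g (Finset.mem_univ i)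
  omega

lemma mvW_sum (u : Fin (n+1) → ℕ) (i j : Fin (n+1)) (hu : 1 ≤ u i) :
    (∑ k, mvW u i j k) = ∑ k, u k := by
  have h1 : mvW u i j i + ∑ k ∈ Finset.univ.erase i, mvW u i j k = ∑ k, mvW u i j k :=
    Finset.add_sum_erase Finset.univ (mvW u i j) (Finset.mem_univ i)
  have h2 : (u i + if i = j then 1 else 0)
      + ∑ k ∈ Finset.univ.erase i, (u k + if k = j then 1 else 0)
      = ∑ k, (u k + if k = j then 1 else 0) :=
    Finset.add_sum_erase Finset.univ (fun k => u k + if k = j then 1 else 0) (Finset.mem_univ i)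
  have h3 : (∑ k ∈ Finset.univ.erase i, mvW u i j k)
      = ∑ k ∈ Finset.univ.erase i, (u k + if k = j then 1 else 0) :=
    Finset.sum_congr rfl fun k hk => by
      unfold mvW
      rw [if_neg (Finset.ne_of_mem_erase hk)]
      omega
  have h4 : (∑ k, (u k + if k = j then 1 else 0)) = (∑ k, u k) + 1 := by
    rw [Finset.sum_add_distrib]
    simp
  have h5 : mvW u i j i = (u i + if i = j then 1 else 0) - 1 := by
    unfold mvW
    rw [if_pos rfl]
  omega


lemma eq_single_of (u : Fin (n+1) → ℕ) (i : Fin (n+1)) (hs : (∑ k, u k) = 1)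
    (hu : 1 ≤ u i) : u = fun k => if k = i then 1 else 0 := by
  have h3 : u i + ∑ k ∈ Finset.univ.erase i, u k = ∑ k, u k :=
    Finset.add_sum_erase Finset.univ u (Finset.mem_univ i)
  funext k
  by_cases hk : k = i
  · subst hk; rw [if_pos rfl]; omega
  · rw [if_neg hk]
    have hk2 : u k ≤ ∑ j ∈ Finset.univ.erase i, u j :=
      Finset.single_le_sum (fun j _ => Nat.zero_le _)
        (Finset.mem_erase.2 ⟨hk, Finset.mem_univ _⟩)
    omega

lemma GoodOf (hm : IsMidpoint m) (L : ℕ)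
    (hUM : ∀ (u v : Fin (n+1) → ℕ) (i j : Fin (n+1)),
      (∑ k, u k) = 2^L → (∑ k, v k) = 2^L → 1 ≤ u i → 1 ≤ v j →
      m (Ey m f L u) (Ey m f L v) = m (Ey m f L (mvW u i j)) (Ey m f L (mvW v j i))) :
    ∀ (u v : Fin (n+1) → ℕ), (∑ k, u k) = 2^L → (∑ k, v k) = 2^L →
      Ey m f (L+1) (fun k => u k + v k) = m (Ey m f L u) (Ey m f L v) := by
  intro u0 v0 hsu0 hsv0
  set w : Fin (n+1) → ℕ := fun k => u0 k + v0 k with hw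
  have hsw : (∑ k, w k) = 2^(L+1) := by
    rw [hw]; rw [Finset.sum_add_distrib, hsu0, hsv0]; ring
  set c : Fin (n+1) → ℕ := takeW w (2^L) with hc
  have hpow : 2^L ≤ 2^(L+1) := Nat.pow_le_pow_right (by norm_num) (by omega)
  have hsc : (∑ k, c k) = 2^L := by
    rw [hc, takeW_sum, hsw]; omega
  have hcle : ∀ k, c k ≤ w k := takeW_le w (2^L)
  have hsd : (∑ k, (w k - c k)) = 2^L := by
    rw [Finset.sum_tsub_distrib Finset.univ (fun k _ => hcle k), hsw, hsc]
    omega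
  have key : ∀ N (u v : Fin (n+1) → ℕ), (∀ k, u k + v k = w k) →
      (∑ k, u k) = 2^L → (∑ k, v k) = 2^L →
      (∑ k, ((u k - c k) + (c k - u k))) = N →
      m (Ey m f L u) (Ey m f L v) = m (Ey m f L c) (Ey m f L (fun k => w k - c k)) := by
    intro N
    induction N using Nat.strong_induction_on with
    | _ N ih =>
      intro u v hsplit hsu hsv hD
      by_cases hu : ∀ k, u k = c k
      · have hu' : u = c := funext hu
        have hv : v = fun k => w k - c k := funext fun k => by
          have h1 := hsplit k; have h2 := hu k; omega
        rw [hu', hv]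
      · push_neg at hu
        obtain ⟨k0, hk0⟩ := hu
        have hex1 : ∃ i, u i < c i := by
          by_contra hno; push_neg at hno
          have : ∀ k, c k = u k := by
            intro k2
            by_contra hne
            have hlt : (∑ k, c k) < ∑ k, u k :=
              Finset.sum_lt_sum (fun k2 _ => hno k2)
                ⟨k2, Finset.mem_univ _, lt_of_le_of_ne (hno k2) hne⟩
            omega
          exact hk0 (this k0).symm
        have hex2 : ∃ j, c j < u j := by
          by_contra hno; push_neg at hno
          have : ∀ k, u k = c k := by
            intro k2
            by_contra hne
            have hlt : (∑ k, u k) < ∑ k, c k :=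
              Finset.sum_lt_sum (fun k2 _ => hno k2)
                ⟨k2, Finset.mem_univ _, lt_of_le_of_ne (hno k2) hne⟩
            omega
          exact hk0 (this k0)
        obtain ⟨i, hi⟩ := hex1
        obtain ⟨j, hj⟩ := hex2
        have hij : i ≠ j := fun h => by rw [h] at hi; omega
        have huj : 1 ≤ u j := by omega
        have hvi : 1 ≤ v i := by have h1 := hsplit i; have h2 := hcle i; omega
        rw [hUM u v j i hsu hsv huj hvi]
        set u' : Fin (n+1) → ℕ := mvW u j i with hu'
        set v' : Fin (n+1) → ℕ := mvW v i j with hv'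
        have hu'i : u' i = u i + 1 := by
          rw [hu']; unfold mvW; rw [if_pos rfl, if_neg hij]; omega
        have hu'j : u' j = u j - 1 := by
          rw [hu']; unfold mvW; rw [if_neg (Ne.symm hij), if_pos rfl]; omega
        have hu'k : ∀ k, k ≠ i → k ≠ j → u' k = u k := by
          intro k h1 h2
          rw [hu']; unfold mvW; rw [if_neg h1, if_neg h2]; omega
        have hsplit' : ∀ k, u' k + v' k = w k := by
          intro k
          have h0 := hsplit k
          rcases eq_or_ne k i with rfl | hki
          · have : v' k = v k - 1 := by
              rw [hv']; unfold mvW; rw [if_neg hij, if_pos rfl]; omega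
            omega
          rcases eq_or_ne k j with rfl | hkj
          · have : v' k = v k + 1 := by
              rw [hv']; unfold mvW; rw [if_pos rfl, if_neg (Ne.symm hij)]; omega
            have h2 := hu'j
            omega
          · have : v' k = v k := by
              rw [hv']; unfold mvW; rw [if_neg hkj, if_neg hki]; omega
            have h2 := hu'k k hki hkj
            omega
        have hsu' : (∑ k, u' k) = 2^L := by rw [hu', mvW_sum u j i huj]; exact hsu
        have hsv' : (∑ k, v' k) = 2^L := by rw [hv', mvW_sum v i j hvi]; exact hsv
        -- distance decreases
        set F : Fin (n+1) → ℕ := fun k => (u k - c k) + (c k - u k) with hF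
        set F' : Fin (n+1) → ℕ := fun k => (u' k - c k) + (c k - u' k) with hF'
        have hjmem : j ∈ Finset.univ.erase i :=
          Finset.mem_erase.2 ⟨Ne.symm hij, Finset.mem_univ _⟩
        have e1 : F i + ∑ k ∈ Finset.univ.erase i, F k = ∑ k, F k :=
          Finset.add_sum_erase _ F (Finset.mem_univ i)
        have e2 : F j + ∑ k ∈ (Finset.univ.erase i).erase j, F k
            = ∑ k ∈ Finset.univ.erase i, F k :=
          Finset.add_sum_erase _ F hjmem
        have e1' : F' i + ∑ k ∈ Finset.univ.erase i, F' k = ∑ k, F' k :=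
          Finset.add_sum_erase _ F' (Finset.mem_univ i)
        have e2' : F' j + ∑ k ∈ (Finset.univ.erase i).erase j, F' k
            = ∑ k ∈ Finset.univ.erase i, F' k :=
          Finset.add_sum_erase _ F' hjmem
        have ecg : (∑ k ∈ (Finset.univ.erase i).erase j, F' k)
            = ∑ k ∈ (Finset.univ.erase i).erase j, F k := by
          refine Finset.sum_congr rfl fun k hk => ?_
          have h1 : k ≠ j := Finset.ne_of_mem_erase hk
          have h2 : k ≠ i := Finset.ne_of_mem_erase (Finset.mem_of_mem_erase hk)
          rw [hF, hF']
          simp only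
          rw [hu'k k h2 h1]
        have hFi : F i = c i - u i := by rw [hF]; simp only; omega
        have hF'i : F' i = c i - (u i + 1) := by rw [hF']; simp only; rw [hu'i]; omega
        have hFj : F j = u j - c j := by rw [hF]; simp only; omega
        have hF'j : F' j = (u j - 1) - c j := by rw [hF']; simp only; rw [hu'j]; omega
        have hDF : (∑ k, F k) = N := hD
        have hlt : (∑ k, F' k) < N := by omega
        exact ih _ hlt u' v' hsplit' hsu' hsv' rfl
  have hEdef : Ey m f (L+1) w = m (Ey m f L c) (Ey m f L (fun k => w k - c k)) := rfl
  rw [hEdef]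
  exact (key _ u0 v0 (fun k => rfl) hsu0 hsv0 rfl).symm


lemma UM (hm : IsMidpoint m) : ∀ L (u v : Fin (n+1) → ℕ) (i j : Fin (n+1)),
    (∑ k, u k) = 2^L → (∑ k, v k) = 2^L → 1 ≤ u i → 1 ≤ v j →
    m (Ey m f L u) (Ey m f L v) = m (Ey m f L (mvW u i j)) (Ey m f L (mvW v j i)) := by
  intro L
  induction L with
  | zero =>
    intro u v i j hsu hsv hui hvj
    rw [pow_zero] at hsu hsv
    have hu' := eq_single_of u i hsu hui
    have hv' := eq_single_of v j hsv hvj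
    have h1 : mvW u i j = fun k => if k = j then 1 else 0 := by
      funext k
      have hk := congrFun hu' k
      show (u k + if k = j then 1 else 0) - (if k = i then 1 else 0)
        = (if k = j then 1 else 0)
      rw [hk]
      rcases eq_or_ne k i with rfl | hki
      · have e1 : (if k = k then (1:ℕ) else 0) = 1 := if_pos rfl
        omega
      · have e1 : (if k = i then (1:ℕ) else 0) = 0 := if_neg hki
        omega
    have h2 : mvW v j i = fun k => if k = i then 1 else 0 := by
      funext k
      have hk := congrFun hv' k
      show (v k + if k = i then 1 else 0) - (if k = j then 1 else 0)
        = (if k = i then 1 else 0)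
      rw [hk]
      rcases eq_or_ne k j with rfl | hkj
      · have e1 : (if k = k then (1:ℕ) else 0) = 1 := if_pos rfl
        omega
      · have e1 : (if k = j then (1:ℕ) else 0) = 0 := if_neg hkj
        omega
    rw [h1, h2, hu', hv', Ey_single, Ey_single]
    exact hm.2.1 _ _
  | succ L ihL =>
    intro u v i j hsu hsv hui hvj
    have hone : 1 ≤ (2:ℕ)^L := Nat.one_le_two_pow
    have hpow : (2:ℕ)^(L+1) = 2^L + 2^L := by ring
    have hsite : (∑ k, (if k = i then (1:ℕ) else 0)) = 1 := by simp
    have hitele : ∀ k, (if k = i then (1:ℕ) else 0) ≤ u k := by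
      intro k; split_ifs with h
      · subst h; exact hui
      · exact Nat.zero_le _
    obtain ⟨ta, htale, htasum⟩ : ∃ ta : Fin (n+1) → ℕ,
        (∀ k, ta k ≤ u k - if k = i then 1 else 0) ∧ (∑ k, ta k) = 2^L - 1 := by
      refine ⟨takeW (fun k => u k - if k = i then 1 else 0) (2^L - 1),
        takeW_le _ _, ?_⟩
      rw [takeW_sum,
        Finset.sum_tsub_distrib Finset.univ (fun k _ => hitele k), hsu, hsite]
      omega
    set a : Fin (n+1) → ℕ := fun k => (if k = i then 1 else 0) + ta k with ha
    have hak : ∀ k, a k = (if k = i then 1 else 0) + ta k := fun k => rfl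
    have hsa : (∑ k, a k) = 2^L := by
      rw [ha, Finset.sum_add_distrib, hsite, htasum]; omega
    have hale : ∀ k, a k ≤ u k := by
      intro k
      have h1 := htale k
      have h3 := hak k
      rcases eq_or_ne k i with rfl | hki
      · have e1 : (if k = k then (1:ℕ) else 0) = 1 := if_pos rfl
        omega
      · have e1 : (if k = i then (1:ℕ) else 0) = 0 := if_neg hki
        omega
    have hai : 1 ≤ a i := by
      have := hak i
      have e1 : (if i = i then (1:ℕ) else 0) = 1 := if_pos rfl
      omega
    set b : Fin (n+1) → ℕ := fun k => u k - a k with hb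
    have hbk : ∀ k, b k = u k - a k := fun k => rfl
    have hsb : (∑ k, b k) = 2^L := by
      rw [hb, Finset.sum_tsub_distrib Finset.univ (fun k _ => hale k), hsu, hsa]
      omega
    have hsjte : (∑ k, (if k = j then (1:ℕ) else 0)) = 1 := by simp
    have hjtele : ∀ k, (if k = j then (1:ℕ) else 0) ≤ v k := by
      intro k; split_ifs with h
      · subst h; exact hvj
      · exact Nat.zero_le _
    obtain ⟨tp, htple, htpsum⟩ : ∃ tp : Fin (n+1) → ℕ,
        (∀ k, tp k ≤ v k - if k = j then 1 else 0) ∧ (∑ k, tp k) = 2^L - 1 := by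
      refine ⟨takeW (fun k => v k - if k = j then 1 else 0) (2^L - 1),
        takeW_le _ _, ?_⟩
      rw [takeW_sum,
        Finset.sum_tsub_distrib Finset.univ (fun k _ => hjtele k), hsv, hsjte]
      omega
    set p : Fin (n+1) → ℕ := fun k => (if k = j then 1 else 0) + tp k with hp
    have hpk : ∀ k, p k = (if k = j then 1 else 0) + tp k := fun k => rfl
    have hsp : (∑ k, p k) = 2^L := by
      rw [hp, Finset.sum_add_distrib, hsjte, htpsum]; omega
    have hple : ∀ k, p k ≤ v k := by
      intro k
      have h1 := htple k
      have h3 := hpk k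
      rcases eq_or_ne k j with rfl | hkj
      · have e1 : (if k = k then (1:ℕ) else 0) = 1 := if_pos rfl
        omega
      · have e1 : (if k = j then (1:ℕ) else 0) = 0 := if_neg hkj
        omega
    have hpj : 1 ≤ p j := by
      have := hpk j
      have e1 : (if j = j then (1:ℕ) else 0) = 1 := if_pos rfl
      omega
    set q : Fin (n+1) → ℕ := fun k => v k - p k with hq
    have hqk : ∀ k, q k = v k - p k := fun k => rfl
    have hsq : (∑ k, q k) = 2^L := by
      rw [hq, Finset.sum_tsub_distrib Finset.univ (fun k _ => hple k), hsv, hsp]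
      omega
    have good := GoodOf m f hm L ihL
    have hab : (fun k => a k + b k) = u := by
      funext k
      show a k + b k = u k
      have h1 := hale k
      have h2 := hbk k
      omega
    have hpq : (fun k => p k + q k) = v := by
      funext k
      show p k + q k = v k
      have h1 := hple k
      have h2 := hqk k
      omega
    have hu_eq : Ey m f (L+1) u = m (Ey m f L a) (Ey m f L b) := by
      rw [← hab]; exact good a b hsa hsb
    have hv_eq : Ey m f (L+1) v = m (Ey m f L p) (Ey m f L q) := by
      rw [← hpq]; exact good p q hsp hsq
    have hsa' : (∑ k, mvW a i j k) = 2^L := by rw [mvW_sum a i j hai]; exact hsa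
    have hsp' : (∑ k, mvW p j i k) = 2^L := by rw [mvW_sum p j i hpj]; exact hsp
    have hab' : (fun k => mvW a i j k + b k) = mvW u i j := by
      funext k
      show mvW a i j k + b k = mvW u i j k
      have h1 := hale k
      have h2 := hbk k
      have h3 : mvW a i j k = (a k + if k = j then 1 else 0) - if k = i then 1 else 0 := rfl
      have h4 : mvW u i j k = (u k + if k = j then 1 else 0) - if k = i then 1 else 0 := rfl
      rcases eq_or_ne k i with rfl | hki
      · have e1 : (if k = k then (1:ℕ) else 0) = 1 := if_pos rfl
        have h5 := hai
        omega
      · have e1 : (if k = i then (1:ℕ) else 0) = 0 := if_neg hki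
        omega
    have hpq' : (fun k => mvW p j i k + q k) = mvW v j i := by
      funext k
      show mvW p j i k + q k = mvW v j i k
      have h1 := hple k
      have h2 := hqk k
      have h3 : mvW p j i k = (p k + if k = i then 1 else 0) - if k = j then 1 else 0 := rfl
      have h4 : mvW v j i k = (v k + if k = i then 1 else 0) - if k = j then 1 else 0 := rfl
      rcases eq_or_ne k j with rfl | hkj
      · have e1 : (if k = k then (1:ℕ) else 0) = 1 := if_pos rfl
        have h5 := hpj
        omega
      · have e1 : (if k = j then (1:ℕ) else 0) = 0 := if_neg hkj
        omega
    have hu_eq' : Ey m f (L+1) (mvW u i j) = m (Ey m f L (mvW a i j)) (Ey m f L b) := by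
      rw [← hab']; exact good (mvW a i j) b hsa' hsb
    have hv_eq' : Ey m f (L+1) (mvW v j i) = m (Ey m f L (mvW p j i)) (Ey m f L q) := by
      rw [← hpq']; exact good (mvW p j i) q hsp' hsq
    rw [hu_eq, hv_eq, hu_eq', hv_eq']
    rw [hm.2.2]
    rw [ihL a p i j hsa hsp hai hpj]
    rw [← hm.2.2]

lemma Good (hm : IsMidpoint m) (L : ℕ) :
    ∀ (u v : Fin (n+1) → ℕ), (∑ k, u k) = 2^L → (∑ k, v k) = 2^L →
      Ey m f (L+1) (fun k => u k + v k) = m (Ey m f L u) (Ey m f L v) :=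
  GoodOf m f hm L (UM m f hm L)

lemma Ey_double (hm : IsMidpoint m) (L : ℕ) (w : Fin (n+1) → ℕ)
    (hw : (∑ k, w k) = 2^L) :
    Ey m f (L+1) (fun k => w k + w k) = Ey m f L w := by
  rw [Good m f hm L w w hw hw]; exact hm.1 _

lemma Ey_pow (hm : IsMidpoint m) (L : ℕ) (w : Fin (n+1) → ℕ)
    (hw : (∑ k, w k) = 2^L) :
    ∀ d, Ey m f L w = Ey m f (L+d) (fun k => 2^d * w k) := by
  intro d
  induction d with
  | zero => simp
  | succ d ih =>
    have hsum : (∑ k, 2^d * w k) = 2^(L+d) := by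
      rw [← Finset.mul_sum, hw]; ring
    have h2 : (fun k => (2:ℕ)^(d+1) * w k) = fun k => (2^d * w k) + (2^d * w k) := by
      funext k; ring
    have h3 := Ey_double m f hm (L+d) (fun k => 2^d * w k) hsum
    rw [ih, h2, show L + (d+1) = (L+d)+1 by omega, h3]

lemma Ey_eq_of_le (hm : IsMidpoint m) {L L' : ℕ} {w w' : Fin (n+1) → ℕ}
    (hle : L ≤ L') (hL : (∑ k, w k) = 2^L) (hL' : (∑ k, w' k) = 2^L')
    (hq : ∀ k, (w k : ℝ)/2^L = (w' k : ℝ)/2^L') : Ey m f L w = Ey m f L' w' := by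
  have hww : ∀ k, w' k = 2^(L'-L) * w k := by
    intro k
    have h := hq k
    have hpos : (0:ℝ) < 2^L := by positivity
    have hpos' : (0:ℝ) < 2^L' := by positivity
    have h2 : (w k : ℝ) * 2^L' = (w' k : ℝ) * 2^L := by
      field_simp at h
      linarith
    have hsplit : (2:ℝ)^L' = 2^(L'-L) * 2^L := by
      rw [← pow_add]; congr 1; omega
    have h3 : ((2^(L'-L) * w k : ℕ) : ℝ) = ((w' k : ℕ) : ℝ) := by
      push_cast
      rw [hsplit] at h2
      have hcc : ((2:ℝ)^(L'-L) * (w k:ℝ)) * 2^L = ((w' k : ℕ) : ℝ) * 2^L := by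
        linear_combination h2
      exact mul_right_cancel₀ (ne_of_gt hpos) hcc
    exact_mod_cast h3.symm
  rw [Ey_pow m f hm L w hL (L'-L)]
  have hLL : L + (L'-L) = L' := by omega
  rw [hLL]
  congr 1
  funext k
  exact (hww k).symm

lemma Ey_eq_of (hm : IsMidpoint m) {L L' : ℕ} {w w' : Fin (n+1) → ℕ}
    (hL : (∑ k, w k) = 2^L) (hL' : (∑ k, w' k) = 2^L')
    (hq : ∀ k, (w k : ℝ)/2^L = (w' k : ℝ)/2^L') : Ey m f L w = Ey m f L' w' := by
  rcases le_total L L' with hle | hle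
  · exact Ey_eq_of_le m f hm hle hL hL' hq
  · exact (Ey_eq_of_le m f hm hle hL' hL (fun k => (hq k).symm)).symm

def IsDy (q : Fin (n+1) → ℝ) : Prop :=
  ∃ Lw : ℕ × (Fin (n+1) → ℕ), (∑ k, Lw.2 k) = 2^Lw.1 ∧ ∀ k, q k = (Lw.2 k : ℝ)/2^Lw.1

def Phi (q : Fin (n+1) → ℝ) : A :=
  if h : IsDy q then Ey m f h.choose.1 h.choose.2 else f 0

lemma Phi_spec (hm : IsMidpoint m) {L : ℕ} {w : Fin (n+1) → ℕ} {q : Fin (n+1) → ℝ}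
    (hL : (∑ k, w k) = 2^L) (hq : ∀ k, q k = (w k : ℝ)/2^L) :
    Phi m f q = Ey m f L w := by
  have h : IsDy q := ⟨(L, w), hL, hq⟩
  rw [Phi, dif_pos h]
  exact Ey_eq_of m f hm h.choose_spec.1 hL
    (fun k => by rw [← h.choose_spec.2 k, ← hq k])

lemma IsDy_mem {q : Fin (n+1) → ℝ} (h : IsDy q) : q ∈ stdSimplex ℝ (Fin (n+1)) := by
  obtain ⟨⟨L, w⟩, hsw, hq⟩ := h
  constructor
  · intro k
    rw [hq k]
    positivity
  · have : (∑ k, q k) = (∑ k, (w k : ℝ))/2^L := by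
      rw [Finset.sum_div]
      exact Finset.sum_congr rfl fun k _ => hq k
    rw [this]
    rw [show (∑ k, (w k:ℝ)) = ((∑ k, w k : ℕ) : ℝ) by push_cast; rfl, hsw]
    rw [Nat.cast_pow]
    norm_num

lemma IsDy_mid {q q' : Fin (n+1) → ℝ} (h : IsDy q) (h' : IsDy q') :
    IsDy (fun k => (q k + q' k)/2) := by
  obtain ⟨⟨L, w⟩, hsw, hq⟩ := h
  obtain ⟨⟨L', w'⟩, hsw', hq'⟩ := h'
  have hsa : (∑ k, 2^(max L L' - L) * w k) = 2^(max L L') := by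
    rw [← Finset.mul_sum, hsw, ← pow_add]
    congr 1; omega
  have hsb : (∑ k, 2^(max L L' - L') * w' k) = 2^(max L L') := by
    rw [← Finset.mul_sum, hsw', ← pow_add]
    congr 1; omega
  refine ⟨(max L L' + 1, fun k => 2^(max L L' - L) * w k + 2^(max L L' - L') * w' k),
    ?_, ?_⟩
  · simp only
    rw [Finset.sum_add_distrib, hsa, hsb]
    ring
  · intro k
    simp only
    have e1 : (2:ℝ)^(max L L') = 2^(max L L' - L) * 2^L := by
      rw [← pow_add]; congr 1; omega
    have e2 : (2:ℝ)^(max L L') = 2^(max L L' - L') * 2^L' := by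
      rw [← pow_add]; congr 1; omega
    have p1 : (0:ℝ) < 2^L := by positivity
    have p2 : (0:ℝ) < 2^L' := by positivity
    rw [hq k, hq' k]
    push_cast
    rw [pow_succ]
    rw [div_add_div _ _ (ne_of_gt p1) (ne_of_gt p2), div_div]
    rw [div_eq_div_iff (by positivity) (by positivity)]
    linear_combination (2 * ((w k:ℝ)) * 2^L') * e1 + (2 * ((w' k:ℝ)) * 2^L) * e2

lemma Phi_mid (hm : IsMidpoint m) {q q' : Fin (n+1) → ℝ} (h : IsDy q) (h' : IsDy q') :
    Phi m f (fun k => (q k + q' k)/2) = m (Phi m f q) (Phi m f q') := by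
  obtain ⟨⟨L, w⟩, hsw, hq⟩ := h
  obtain ⟨⟨L', w'⟩, hsw', hq'⟩ := h'
  have hsa : (∑ k, 2^(max L L' - L) * w k) = 2^(max L L') := by
    rw [← Finset.mul_sum, hsw, ← pow_add]
    congr 1; omega
  have hsb : (∑ k, 2^(max L L' - L') * w' k) = 2^(max L L') := by
    rw [← Finset.mul_sum, hsw', ← pow_add]
    congr 1; omega
  have e1 : (2:ℝ)^(max L L') = 2^(max L L' - L) * 2^L := by
    rw [← pow_add]; congr 1; omega
  have e2 : (2:ℝ)^(max L L') = 2^(max L L' - L') * 2^L' := by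
    rw [← pow_add]; congr 1; omega
  have p1 : (0:ℝ) < 2^L := by positivity
  have p2 : (0:ℝ) < 2^L' := by positivity
  have p3 : (0:ℝ) < 2^(max L L') := by positivity
  have hqa : ∀ k, q k = ((2^(max L L' - L) * w k : ℕ) : ℝ)/2^(max L L') := by
    intro k
    rw [hq k]
    push_cast
    rw [div_eq_div_iff (ne_of_gt p1) (ne_of_gt p3)]
    linear_combination ((w k:ℝ)) * e1
  have hqb : ∀ k, q' k = ((2^(max L L' - L') * w' k : ℕ) : ℝ)/2^(max L L') := by
    intro k
    rw [hq' k]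
    push_cast
    rw [div_eq_div_iff (ne_of_gt p2) (ne_of_gt p3)]
    linear_combination ((w' k:ℝ)) * e2
  have hsum : (∑ k, (2^(max L L' - L) * w k + 2^(max L L' - L') * w' k)) = 2^(max L L' + 1) := by
    rw [Finset.sum_add_distrib, hsa, hsb]
    ring
  have hmid : ∀ k, (q k + q' k)/2
      = ((2^(max L L' - L) * w k + 2^(max L L' - L') * w' k : ℕ) : ℝ)/2^(max L L' + 1) := by
    intro k
    rw [hqa k, hqb k]
    push_cast
    rw [pow_succ, ← add_div, div_div]
  rw [Phi_spec m f hm hsum hmid, Phi_spec m f hm hsa hqa, Phi_spec m f hm hsb hqb]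
  exact Good m f hm (max L L') _ _ hsa hsb

def Mstr (hit : Iterative m) : (ℕ → A) → A :=
  (hit (ℕ → A) (fun x => (x 0, fun k => x (k+1)))).exists.choose

lemma Mstr_eq (hit : Iterative m) (x : ℕ → A) :
    Mstr m hit x = m (x 0) (Mstr m hit (fun k => x (k+1))) :=
  (hit (ℕ → A) (fun x => (x 0, fun k => x (k+1)))).exists.choose_spec x

lemma sol_unique (hit : Iterative m) {X : Type} (c : X → A × X) (u v : X → A)
    (hu : ∀ x, u x = m (c x).1 (u (c x).2)) (hv : ∀ x, v x = m (c x).1 (v (c x).2)) :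
    u = v := by
  obtain ⟨u0, -, huniq⟩ := hit X c
  rw [huniq u hu, huniq v hv]

lemma Mstr_const (hm : IsMidpoint m) (hit : Iterative m) (a : A) :
    Mstr m hit (fun _ => a) = a := by
  have h := sol_unique m hit (X := Unit) (fun _ => (a, ()))
    (fun _ => Mstr m hit (fun _ => a)) (fun _ => a)
    (fun _ => Mstr_eq m hit (fun _ => a)) (fun _ => (hm.1 a).symm)
  exact congrFun h ()

lemma Mstr_hom (hm : IsMidpoint m) (hit : Iterative m) (x y : ℕ → A) :
    Mstr m hit (fun k => m (x k) (y k)) = m (Mstr m hit x) (Mstr m hit y) := by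
  have h := sol_unique m hit
    (X := (ℕ → A) × (ℕ → A))
    (fun z => (m (z.1 0) (z.2 0), (fun k => z.1 (k+1), fun k => z.2 (k+1))))
    (fun z => Mstr m hit (fun k => m (z.1 k) (z.2 k)))
    (fun z => m (Mstr m hit z.1) (Mstr m hit z.2))
    (fun z => Mstr_eq m hit (fun k => m (z.1 k) (z.2 k)))
    (fun z => by
      show m (Mstr m hit z.1) (Mstr m hit z.2)
        = m (m (z.1 0) (z.2 0))
          (m (Mstr m hit (fun k => z.1 (k+1))) (Mstr m hit (fun k => z.2 (k+1))))
      rw [Mstr_eq m hit z.1, Mstr_eq m hit z.2, hm.2.2])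
  exact congrFun h (x, y)

lemma carry_lemma (hm : IsMidpoint m) (hc : Cancellative m) (hit : Iterative m)
    (x y p q : ℕ → A) (h0 : p 0 = q 0)
    (hstep : ∀ k, m (m (p (k+1)) (x k)) (q k) = m (m (q (k+1)) (y k)) (p k)) :
    Mstr m hit x = Mstr m hit y := by
  set P' := Mstr m hit (fun k => p (k+1)) with hP'
  set Q' := Mstr m hit (fun k => q (k+1)) with hQ'
  set X := Mstr m hit x with hX
  set Y := Mstr m hit y with hY
  have e1 : Mstr m hit (fun k => m (m (p (k+1)) (x k)) (q k))
      = m (m P' X) (Mstr m hit q) := by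
    rw [Mstr_hom m hm hit (fun k => m (p (k+1)) (x k)) q,
      Mstr_hom m hm hit (fun k => p (k+1)) x]
  have e2 : Mstr m hit (fun k => m (m (q (k+1)) (y k)) (p k))
      = m (m Q' Y) (Mstr m hit p) := by
    rw [Mstr_hom m hm hit (fun k => m (q (k+1)) (y k)) p,
      Mstr_hom m hm hit (fun k => q (k+1)) y]
  have e3 : (fun k => m (m (p (k+1)) (x k)) (q k))
      = (fun k => m (m (q (k+1)) (y k)) (p k)) := funext hstep
  have eP : Mstr m hit p = m (p 0) P' := Mstr_eq m hit p
  have eQ : Mstr m hit q = m (p 0) Q' := by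
    rw [Mstr_eq m hit q, ← h0]
  have main : m (m P' X) (m (p 0) Q') = m (m Q' Y) (m (p 0) P') := by
    rw [← eQ, ← eP, ← e1, ← e2, e3]
  have lhs1 : m (m P' X) (m (p 0) Q') = m (m (p 0) X) (m P' Q') := by
    rw [hm.2.2 P' X (p 0) Q', hm.2.1 P' (p 0), hm.2.2 (p 0) P' X Q']
  have rhs1 : m (m Q' Y) (m (p 0) P') = m (m (p 0) Y) (m P' Q') := by
    rw [hm.2.2 Q' Y (p 0) P', hm.2.1 Q' (p 0), hm.2.2 (p 0) Q' Y P',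
      hm.2.1 Q' P']
  have main2 : m (m P' Q') (m (p 0) X) = m (m P' Q') (m (p 0) Y) := by
    rw [hm.2.1 (m P' Q') (m (p 0) X), hm.2.1 (m P' Q') (m (p 0) Y),
      ← lhs1, ← rhs1, main]
  have main3 : m (p 0) X = m (p 0) Y := hc _ _ _ main2
  exact hc _ _ _ main3

lemma max_sub_max_neg (x : ℝ) : max x 0 - max (-x) 0 = x := by
  rcases le_total x 0 with h | h
  · rw [max_eq_right h, max_eq_left (by linarith)]
    ring
  · rw [max_eq_left h, max_eq_right (by linarith)]
    ring

lemma crux (hm : IsMidpoint m) (hc : Cancellative m) (hit : Iterative m)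
    (a b : ℕ → (Fin (n+1) → ℝ))
    (ha : ∀ k, IsDy (a k)) (hb : ∀ k, IsDy (b k))
    (γ : ℕ → (Fin (n+1) → ℝ)) (h0 : ∀ i, γ 0 i = 0)
    (hrec : ∀ k i, γ (k+1) i = 2 * γ k i + (b k i - a k i))
    (hbd : ∀ k, ∃ c d : Fin (n+1) → ℝ, c ∈ stdSimplex ℝ (Fin (n+1)) ∧
      d ∈ stdSimplex ℝ (Fin (n+1)) ∧ ∀ i, γ k i = c i - d i) :
    Mstr m hit (fun k => Phi m f (a k)) = Mstr m hit (fun k => Phi m f (b k)) := by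
  -- dyadic representations for the carries
  have hdy : ∀ k, ∃ (L : ℕ) (z : Fin (n+1) → ℤ), ∀ i, γ k i = (z i : ℝ)/2^L := by
    intro k
    induction k with
    | zero => exact ⟨0, 0, fun i => by simp [h0 i]⟩
    | succ k ih =>
      obtain ⟨L, z, hz⟩ := ih
      obtain ⟨⟨La, wa⟩, hsa, hqa⟩ := ha k
      obtain ⟨⟨Lb, wb⟩, hsb, hqb⟩ := hb k
      refine ⟨L + La + Lb,
        fun i => 2 * z i * 2^(La+Lb) + ((wb i : ℤ) * 2^(L+La) - (wa i : ℤ) * 2^(L+Lb)),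
        fun i => ?_⟩
      rw [hrec k i, hz i, hqa i, hqb i]
      have p1 : (0:ℝ) < 2^L := by positivity
      have p2 : (0:ℝ) < 2^La := by positivity
      have p3 : (0:ℝ) < 2^Lb := by positivity
      push_cast
      field_simp
      ring_nf
  -- sum facts
  have hsum0 : ∀ k, (∑ i, γ k i) = 0 := by
    intro k
    obtain ⟨c, d, hcs, hds, hcd⟩ := hbd k
    have h1 : (∑ i, γ k i) = (∑ i, c i) - ∑ i, d i := by
      rw [← Finset.sum_sub_distrib]
      exact Finset.sum_congr rfl fun i _ => hcd i
    rw [h1, hcs.2, hds.2]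
    ring
  have hplus : ∀ k, (∑ i, max (γ k i) 0) ≤ 1 := by
    intro k
    obtain ⟨c, d, hcs, hds, hcd⟩ := hbd k
    calc (∑ i, max (γ k i) 0) ≤ ∑ i, c i := by
          refine Finset.sum_le_sum fun i _ => ?_
          rw [hcd i]
          have h1 := hds.1 i
          have h2 := hcs.1 i
          rw [max_le_iff]
          constructor <;> linarith
      _ = 1 := hcs.2
  have hplus_eq : ∀ k, (∑ i, max (-γ k i) 0) = ∑ i, max (γ k i) 0 := by
    intro k
    have h1 : (∑ i, (max (γ k i) 0 - max (-γ k i) 0)) = 0 := by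
      rw [Finset.sum_congr rfl fun i _ => max_sub_max_neg (γ k i)]
      exact hsum0 k
    rw [Finset.sum_sub_distrib] at h1
    linarith
  -- the companion simplex points
  set pc : ℕ → Fin (n+1) → ℝ :=
    fun k i => max (γ k i) 0 + (if i = 0 then 1 - ∑ j, max (γ k j) 0 else 0) with hpc_def
  set qc : ℕ → Fin (n+1) → ℝ :=
    fun k i => max (-γ k i) 0 + (if i = 0 then 1 - ∑ j, max (γ k j) 0 else 0) with hqc_def
  have pdq : ∀ k i, pc k i - qc k i = γ k i := by
    intro k i
    show (max (γ k i) 0 + (if i = 0 then 1 - ∑ j, max (γ k j) 0 else 0))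
      - (max (-γ k i) 0 + (if i = 0 then 1 - ∑ j, max (γ k j) 0 else 0)) = γ k i
    linarith [max_sub_max_neg (γ k i)]
  -- dyadicity of the companions
  have key_dy : ∀ k, IsDy (pc k) ∧ IsDy (qc k) := by
    intro k
    obtain ⟨L, z, hz⟩ := hdy k
    have hp2 : (0:ℝ) < 2^L := by positivity
    have hcast : ∀ i, ((z i).toNat : ℝ) = max ((z i : ℝ)) 0 := by
      intro i
      have h1 : ((z i).toNat : ℤ) = max (z i) 0 := Int.toNat_eq_max (z i)
      have h2 : (((z i).toNat : ℤ) : ℝ) = ((max (z i) 0 : ℤ) : ℝ) := by rw [h1]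
      push_cast at h2
      exact_mod_cast h2
    have hcast' : ∀ i, (((-z i).toNat : ℕ) : ℝ) = max (-(z i : ℝ)) 0 := by
      intro i
      have h1 : (((-z i).toNat) : ℤ) = max (-z i) 0 := Int.toNat_eq_max (-z i)
      have h2 : ((((-z i).toNat) : ℤ) : ℝ) = ((max (-z i) 0 : ℤ) : ℝ) := by rw [h1]
      push_cast at h2
      exact_mod_cast h2
    have hmaxg : ∀ i, max (γ k i) 0 = ((z i).toNat : ℝ)/2^L := by
      intro i
      rw [hcast i, hz i]
      rcases le_total ((z i : ℝ)) 0 with h | h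
      · have h' : (z i : ℝ)/2^L ≤ 0 := div_nonpos_of_nonpos_of_nonneg h hp2.le
        rw [max_eq_right h', max_eq_right h, zero_div]
      · have h' : (0:ℝ) ≤ (z i : ℝ)/2^L := div_nonneg h hp2.le
        rw [max_eq_left h', max_eq_left h]
    have hmaxg' : ∀ i, max (-γ k i) 0 = (((-z i).toNat : ℕ) : ℝ)/2^L := by
      intro i
      rw [hcast' i, hz i]
      rcases le_total ((z i : ℝ)) 0 with h | h
      · have h' : (0:ℝ) ≤ -((z i : ℝ)/2^L) := by
          have := div_nonpos_of_nonpos_of_nonneg h hp2.le (a := (z i : ℝ)) (b := (2:ℝ)^L)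
          linarith
        rw [max_eq_left h', max_eq_left (by linarith), neg_div]
      · have h' : -((z i : ℝ)/2^L) ≤ 0 := by
          have := div_nonneg h hp2.le
          linarith
        rw [max_eq_right h', max_eq_right (by linarith), zero_div]
    have hsmax : (∑ i, max (γ k i) 0) = ((∑ i, (z i).toNat : ℕ) : ℝ)/2^L := by
      rw [Finset.sum_congr rfl fun i _ => hmaxg i, ← Finset.sum_div]
      push_cast
      rfl
    have hsmax' : (∑ i, max (-γ k i) 0) = ((∑ i, (-z i).toNat : ℕ) : ℝ)/2^L := by
      rw [Finset.sum_congr rfl fun i _ => hmaxg' i, ← Finset.sum_div]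
      push_cast
      rfl
    have hNle : (∑ i, (z i).toNat) ≤ 2^L := by
      have h1 : ((∑ i, (z i).toNat : ℕ) : ℝ)/2^L ≤ 1 := by
        rw [← hsmax]; exact hplus k
      have h2 : ((∑ i, (z i).toNat : ℕ) : ℝ) ≤ (2:ℝ)^L := (div_le_one hp2).1 h1
      exact_mod_cast h2
    have hNeq : (∑ i, (-z i).toNat) = ∑ i, (z i).toNat := by
      have h1 : ((∑ i, (-z i).toNat : ℕ) : ℝ)/2^L = ((∑ i, (z i).toNat : ℕ) : ℝ)/2^L := by
        rw [← hsmax, ← hsmax']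
        exact hplus_eq k
      have h2 : ((∑ i, (-z i).toNat : ℕ) : ℝ) = ((∑ i, (z i).toNat : ℕ) : ℝ) := by
        rw [div_eq_div_iff (ne_of_gt hp2) (ne_of_gt hp2)] at h1
        exact mul_right_cancel₀ (ne_of_gt hp2) h1
      exact_mod_cast h2
    have hfill : (1 - ∑ j, max (γ k j) 0)
        = ((2^L - ∑ j, (z j).toNat : ℕ) : ℝ)/2^L := by
      rw [hsmax, Nat.cast_sub hNle]
      push_cast
      field_simp
    constructor
    · refine ⟨(L, fun i => (z i).toNat + (if i = 0 then 2^L - ∑ j, (z j).toNat else 0)),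
        ?_, ?_⟩
      · show (∑ i, ((z i).toNat + if i = 0 then 2^L - ∑ j, (z j).toNat else 0)) = 2^L
        rw [Finset.sum_add_distrib]
        have h1 : (∑ i : Fin (n+1), if i = 0 then 2^L - ∑ j, (z j).toNat else 0)
            = 2^L - ∑ j, (z j).toNat := by
          rw [Finset.sum_ite_eq' Finset.univ (0 : Fin (n+1))
            (fun _ => 2^L - ∑ j, (z j).toNat)]
          simp
        rw [h1]
        omega
      · intro i
        show max (γ k i) 0 + (if i = 0 then 1 - ∑ j, max (γ k j) 0 else 0)
          = (((z i).toNat + if i = 0 then 2^L - ∑ j, (z j).toNat else 0 : ℕ) : ℝ)/2^L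
        by_cases hi : i = 0
        · rw [if_pos hi, if_pos hi, hmaxg i, hfill, Nat.cast_add, add_div]
        · rw [if_neg hi, if_neg hi, hmaxg i]
          push_cast
          ring
    · refine ⟨(L, fun i => (-z i).toNat + (if i = 0 then 2^L - ∑ j, (z j).toNat else 0)),
        ?_, ?_⟩
      · show (∑ i, ((-z i).toNat + if i = 0 then 2^L - ∑ j, (z j).toNat else 0)) = 2^L
        rw [Finset.sum_add_distrib]
        have h1 : (∑ i : Fin (n+1), if i = 0 then 2^L - ∑ j, (z j).toNat else 0)
            = 2^L - ∑ j, (z j).toNat := by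
          rw [Finset.sum_ite_eq' Finset.univ (0 : Fin (n+1))
            (fun _ => 2^L - ∑ j, (z j).toNat)]
          simp
        rw [h1, hNeq]
        omega
      · intro i
        show max (-γ k i) 0 + (if i = 0 then 1 - ∑ j, max (γ k j) 0 else 0)
          = (((-z i).toNat + if i = 0 then 2^L - ∑ j, (z j).toNat else 0 : ℕ) : ℝ)/2^L
        by_cases hi : i = 0
        · rw [if_pos hi, if_pos hi, hmaxg' i, hfill, Nat.cast_add, add_div]
        · rw [if_neg hi, if_neg hi, hmaxg' i]
          push_cast
          ring
  have hpcdy : ∀ k, IsDy (pc k) := fun k => (key_dy k).1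
  have hqcdy : ∀ k, IsDy (qc k) := fun k => (key_dy k).2
  have h00 : Phi m f (pc 0) = Phi m f (qc 0) := by
    congr 1
    funext i
    show max (γ 0 i) 0 + (if i = 0 then 1 - ∑ j, max (γ 0 j) 0 else 0)
      = max (-γ 0 i) 0 + (if i = 0 then 1 - ∑ j, max (γ 0 j) 0 else 0)
    rw [h0 i]
    norm_num
  have hstep : ∀ k, m (m (Phi m f (pc (k+1))) (Phi m f (a k))) (Phi m f (qc k))
      = m (m (Phi m f (qc (k+1))) (Phi m f (b k))) (Phi m f (pc k)) := by
    intro k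
    rw [← Phi_mid m f hm (hpcdy (k+1)) (ha k),
      ← Phi_mid m f hm (IsDy_mid (hpcdy (k+1)) (ha k)) (hqcdy k),
      ← Phi_mid m f hm (hqcdy (k+1)) (hb k),
      ← Phi_mid m f hm (IsDy_mid (hqcdy (k+1)) (hb k)) (hpcdy k)]
    congr 1
    funext i
    have e1 := pdq k i
    have e2 := pdq (k+1) i
    have e3 := hrec k i
    show ((pc (k+1) i + a k i)/2 + qc k i)/2 = ((qc (k+1) i + b k i)/2 + pc k i)/2
    linear_combination e2/4 + e3/4 - e1/2
  exact carry_lemma m hm hc hit _ _ (fun k => Phi m f (pc k)) (fun k => Phi m f (qc k))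
    h00 hstep

lemma simplex_coord_le_one (p : stdSimplex ℝ (Fin (n+1))) (i : Fin (n+1)) : p.1 i ≤ 1 := by
  have h1 : p.1 i ≤ ∑ j, p.1 j :=
    Finset.single_le_sum (fun j _ => p.2.1 j) (Finset.mem_univ i)
  rw [p.2.2] at h1
  exact h1

lemma istar_exists (p : stdSimplex ℝ (Fin (n+1))) : ∃ i, 1 ≤ (n+1 : ℝ) * p.1 i := by
  by_contra hno
  push_neg at hno
  have h1 : (∑ i, (n+1:ℝ) * p.1 i) < ∑ _i : Fin (n+1), (1:ℝ) :=
    Finset.sum_lt_sum_of_nonempty Finset.univ_nonempty (fun i _ => hno i)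
  rw [← Finset.mul_sum, p.2.2, mul_one] at h1
  have h2 : (∑ _i : Fin (n+1), (1:ℝ)) = (n+1 : ℝ) := by simp
  rw [h2] at h1
  linarith

def istar (p : stdSimplex ℝ (Fin (n+1))) : Fin (n+1) := (istar_exists p).choose

lemma istar_spec (p : stdSimplex ℝ (Fin (n+1))) : 1 ≤ (n+1:ℝ) * p.1 (istar p) :=
  (istar_exists p).choose_spec

def expN (n : ℕ) : ℕ := 2*(n+1)

lemma expN_big : ((n+1) * (n+1) : ℝ) ≤ 2^(expN n) := by
  have h1 : (n+1) < 2^(n+1) := Nat.lt_two_pow_self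
  have h2 : (n+1) * (n+1) ≤ 2^(n+1) * 2^(n+1) :=
    Nat.mul_le_mul (le_of_lt h1) (le_of_lt h1)
  have h3 : (2:ℕ)^(n+1) * 2^(n+1) = 2^(expN n) := by
    rw [← pow_add]; congr 1; unfold expN; ring
  rw [h3] at h2
  exact_mod_cast h2

def swn (p : stdSimplex ℝ (Fin (n+1))) : Fin (n+1) → ℕ := fun i =>
  if i = istar p then
    2^(expN n) - ∑ j ∈ Finset.univ.erase (istar p), ⌊(2:ℝ)^(expN n) * p.1 j⌋₊
  else ⌊(2:ℝ)^(expN n) * p.1 i⌋₊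

lemma floor_le_mul (p : stdSimplex ℝ (Fin (n+1))) (j : Fin (n+1)) :
    ((⌊(2:ℝ)^(expN n) * p.1 j⌋₊ : ℕ) : ℝ) ≤ 2^(expN n) * p.1 j :=
  Nat.floor_le (mul_nonneg (by positivity) (p.2.1 j))

lemma erase_sum_coord (p : stdSimplex ℝ (Fin (n+1))) :
    (∑ j ∈ Finset.univ.erase (istar p), p.1 j) = 1 - p.1 (istar p) := by
  have h1 := Finset.add_sum_erase Finset.univ p.1 (Finset.mem_univ (istar p))
  rw [p.2.2] at h1
  linarith

lemma Ssum_le (p : stdSimplex ℝ (Fin (n+1))) :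
    ((∑ j ∈ Finset.univ.erase (istar p), ⌊(2:ℝ)^(expN n) * p.1 j⌋₊ : ℕ) : ℝ)
      ≤ 2^(expN n) * (1 - p.1 (istar p)) := by
  push_cast
  calc (∑ j ∈ Finset.univ.erase (istar p), ((⌊(2:ℝ)^(expN n) * p.1 j⌋₊ : ℕ) : ℝ))
      ≤ ∑ j ∈ Finset.univ.erase (istar p), (2:ℝ)^(expN n) * p.1 j :=
        Finset.sum_le_sum (fun j _ => floor_le_mul p j)
    _ = 2^(expN n) * (1 - p.1 (istar p)) := by
        rw [← Finset.mul_sum, erase_sum_coord p]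

lemma S_le_E (p : stdSimplex ℝ (Fin (n+1))) :
    (∑ j ∈ Finset.univ.erase (istar p), ⌊(2:ℝ)^(expN n) * p.1 j⌋₊) ≤ 2^(expN n) := by
  have h1 := Ssum_le p
  have h2 : (0:ℝ) ≤ p.1 (istar p) := p.2.1 _
  have h3 : ((∑ j ∈ Finset.univ.erase (istar p), ⌊(2:ℝ)^(expN n) * p.1 j⌋₊ : ℕ) : ℝ)
      ≤ ((2^(expN n) : ℕ) : ℝ) := by
    have hE : (0:ℝ) < 2^(expN n) := by positivity
    push_cast at h1 ⊢
    nlinarith [h1, h2, hE]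
  exact_mod_cast h3

lemma swn_sum (p : stdSimplex ℝ (Fin (n+1))) : (∑ i, swn p i) = 2^(expN n) := by
  have h1 := Finset.add_sum_erase Finset.univ (swn p) (Finset.mem_univ (istar p))
  have h2 : swn p (istar p)
      = 2^(expN n) - ∑ j ∈ Finset.univ.erase (istar p), ⌊(2:ℝ)^(expN n) * p.1 j⌋₊ := by
    unfold swn; rw [if_pos rfl]
  have h3 : (∑ j ∈ Finset.univ.erase (istar p), swn p j)
      = ∑ j ∈ Finset.univ.erase (istar p), ⌊(2:ℝ)^(expN n) * p.1 j⌋₊ := by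
    refine Finset.sum_congr rfl fun j hj => ?_
    unfold swn
    rw [if_neg (Finset.ne_of_mem_erase hj)]
  have h4 := S_le_E p
  omega

lemma simplex_erase_card : (Finset.univ.erase (istar (n := n) p)).card = n := by
  rw [Finset.card_erase_of_mem (Finset.mem_univ _), Finset.card_univ]
  simp

lemma Ssum_ge (p : stdSimplex ℝ (Fin (n+1))) :
    2^(expN n) * (1 - p.1 (istar p)) - n
      ≤ ((∑ j ∈ Finset.univ.erase (istar p), ⌊(2:ℝ)^(expN n) * p.1 j⌋₊ : ℕ) : ℝ) := by
  push_cast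
  have h1 : ∀ j ∈ Finset.univ.erase (istar p),
      (2:ℝ)^(expN n) * p.1 j - 1 ≤ ((⌊(2:ℝ)^(expN n) * p.1 j⌋₊ : ℕ) : ℝ) := by
    intro j _
    have := Nat.lt_floor_add_one ((2:ℝ)^(expN n) * p.1 j)
    linarith
  have h2 : (∑ j ∈ Finset.univ.erase (istar p), ((2:ℝ)^(expN n) * p.1 j - 1))
      ≤ ∑ j ∈ Finset.univ.erase (istar p), ((⌊(2:ℝ)^(expN n) * p.1 j⌋₊ : ℕ) : ℝ) :=
    Finset.sum_le_sum h1
  have h3 : (∑ j ∈ Finset.univ.erase (istar p), ((2:ℝ)^(expN n) * p.1 j - 1))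
      = 2^(expN n) * (1 - p.1 (istar p)) - n := by
    rw [Finset.sum_sub_distrib, ← Finset.mul_sum, erase_sum_coord p]
    rw [Finset.sum_const, simplex_erase_card]
    simp
  linarith

def sFun (p : stdSimplex ℝ (Fin (n+1))) : Fin (n+1) → ℝ :=
  fun i => ((swn p i : ℕ) : ℝ)/2^(expN n)

lemma sFun_dy (p : stdSimplex ℝ (Fin (n+1))) : IsDy (sFun p) :=
  ⟨(expN n, swn p), swn_sum p, fun i => rfl⟩

lemma sFun_le (p : stdSimplex ℝ (Fin (n+1))) : ∀ i, sFun p i ≤ 2 * p.1 i := by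
  intro i
  have hE : (0:ℝ) < 2^(expN n) := by positivity
  unfold sFun
  rw [div_le_iff₀ hE]
  by_cases hi : i = istar p
  · rw [hi]
    have h2 : swn p (istar p)
        = 2^(expN n) - ∑ j ∈ Finset.univ.erase (istar p), ⌊(2:ℝ)^(expN n) * p.1 j⌋₊ := by
      unfold swn; rw [if_pos rfl]
    have h4 := S_le_E p
    have h5 : ((swn p (istar p) : ℕ) : ℝ)
        = 2^(expN n)
          - ((∑ j ∈ Finset.univ.erase (istar p), ⌊(2:ℝ)^(expN n) * p.1 j⌋₊ : ℕ) : ℝ) := by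
      rw [h2, Nat.cast_sub h4]
      push_cast
      rfl
    rw [h5]
    have h6 := Ssum_ge p
    have h7 := istar_spec p
    have h8 := expN_big (n := n)
    have h9 : (0:ℝ) ≤ p.1 (istar p) := p.2.1 _
    -- n ≤ p * E, via (n+1) * (p*E) ≥ E ≥ (n+1)^2
    nlinarith [mul_le_mul_of_nonneg_right h7 (le_of_lt hE)]
  · have h2 : swn p i = ⌊(2:ℝ)^(expN n) * p.1 i⌋₊ := by
      unfold swn; rw [if_neg hi]
    rw [h2]
    have h3 := floor_le_mul p i
    have h9 : (0:ℝ) ≤ p.1 i := p.2.1 _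
    nlinarith

lemma sFun_sum (p : stdSimplex ℝ (Fin (n+1))) : (∑ i, sFun p i) = 1 :=
  (IsDy_mem (sFun_dy p)).2

lemma sFun_nonneg (p : stdSimplex ℝ (Fin (n+1))) : ∀ i, 0 ≤ sFun p i :=
  (IsDy_mem (sFun_dy p)).1

def rFun (p : stdSimplex ℝ (Fin (n+1))) : stdSimplex ℝ (Fin (n+1)) :=
  ⟨fun i => 2 * p.1 i - sFun p i, by
    constructor
    · intro i
      have := sFun_le p i
      show 0 ≤ 2 * p.1 i - sFun p i
      linarith
    · rw [Finset.sum_sub_distrib, ← Finset.mul_sum, p.2.2, sFun_sum p]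
      norm_num⟩

lemma rFun_val (p : stdSimplex ℝ (Fin (n+1))) (i : Fin (n+1)) :
    (rFun p).1 i = 2 * p.1 i - sFun p i := rfl

def sPt (p : stdSimplex ℝ (Fin (n+1))) : stdSimplex ℝ (Fin (n+1)) :=
  ⟨sFun p, IsDy_mem (sFun_dy p)⟩

lemma p_eq_mid (p : stdSimplex ℝ (Fin (n+1))) : p = simplexMid (sPt p) (rFun p) := by
  apply Subtype.ext
  funext i
  show p.1 i = (sFun p i + (2 * p.1 i - sFun p i))/2
  ring

def hFun (hit : Iterative m) (p : stdSimplex ℝ (Fin (n+1))) : A :=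
  Mstr m hit (fun k => Phi m f (sFun (rFun^[k] p)))

lemma hFun_eq (hit : Iterative m) (p : stdSimplex ℝ (Fin (n+1))) :
    hFun m f hit p = m (Phi m f (sFun p)) (hFun m f hit (rFun p)) := by
  have h1 : (fun k => Phi m f (sFun (rFun^[k+1] p)))
      = (fun k => Phi m f (sFun (rFun^[k] (rFun p)))) := by
    funext k
    rw [Function.iterate_succ_apply]
  rw [hFun, Mstr_eq m hit]
  show m (Phi m f (sFun (rFun^[0] p)))
      (Mstr m hit (fun k => Phi m f (sFun (rFun^[k+1] p)))) = _
  rw [h1]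
  rfl

lemma vertex_dy (i : Fin (n+1)) : IsDy ((simplexVertex (n := n) i).1) := by
  refine ⟨(0, fun j => if j = i then 1 else 0), by simp, fun j => ?_⟩
  show (if j = i then (1:ℝ) else 0) = ((if j = i then (1:ℕ) else 0 : ℕ) : ℝ)/2^(0:ℕ)
  split_ifs <;> simp

lemma Phi_vertex (hm : IsMidpoint m) (i : Fin (n+1)) :
    Phi m f ((simplexVertex (n := n) i).1) = f i := by
  have hq : ∀ j, (simplexVertex (n := n) i).1 j
      = ((if j = i then (1:ℕ) else 0 : ℕ) : ℝ)/2^(0:ℕ) := by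
    intro j
    show (if j = i then (1:ℝ) else 0) = _
    split_ifs <;> simp
  rw [Phi_spec m f hm (L := 0) (w := fun j => if j = i then 1 else 0) (by simp) hq,
    Ey_single]

lemma rFun_iter_succ (x : stdSimplex ℝ (Fin (n+1))) (k : ℕ) (j : Fin (n+1)) :
    (rFun^[k+1] x).1 j = 2 * (rFun^[k] x).1 j - sFun (rFun^[k] x) j := by
  rw [Function.iterate_succ_apply']
  rfl

lemma hFun_vertex (hm : IsMidpoint m) (hc : Cancellative m) (hit : Iterative m)
    (i : Fin (n+1)) : hFun m f hit (simplexVertex i) = f i := by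
  have hcx := crux m f hm hc hit
    (fun k => sFun (rFun^[k] (simplexVertex i))) (fun _ => (simplexVertex i).1)
    (fun k => sFun_dy _) (fun _ => vertex_dy i)
    (fun k j => (rFun^[k] (simplexVertex i)).1 j - (simplexVertex i).1 j)
    (fun j => by simp)
    (fun k j => by
      show (rFun^[k+1] (simplexVertex i)).1 j - (simplexVertex i).1 j
        = 2 * ((rFun^[k] (simplexVertex i)).1 j - (simplexVertex i).1 j)
          + ((simplexVertex i).1 j - sFun (rFun^[k] (simplexVertex i)) j)
      rw [rFun_iter_succ]
      ring)
    (fun k => ⟨(rFun^[k] (simplexVertex i)).1, (simplexVertex i).1,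
      (rFun^[k] (simplexVertex i)).2, (simplexVertex i).2, fun j => rfl⟩)
  calc hFun m f hit (simplexVertex i)
      = Mstr m hit (fun _ => Phi m f ((simplexVertex (n := n) i).1)) := hcx
    _ = Phi m f ((simplexVertex (n := n) i).1) := Mstr_const m hm hit _
    _ = f i := Phi_vertex m f hm i

lemma hFun_mid (hm : IsMidpoint m) (hc : Cancellative m) (hit : Iterative m)
    (p q : stdSimplex ℝ (Fin (n+1))) :
    hFun m f hit (simplexMid p q) = m (hFun m f hit p) (hFun m f hit q) := by
  have hrhs : m (hFun m f hit p) (hFun m f hit q)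
      = Mstr m hit (fun k => Phi m f
          (fun j => (sFun (rFun^[k] p) j + sFun (rFun^[k] q) j)/2)) := by
    rw [hFun, hFun, ← Mstr_hom m hm hit]
    congr 1
    funext k
    rw [Phi_mid m f hm (sFun_dy _) (sFun_dy _)]
  rw [hrhs]
  exact crux m f hm hc hit
    (fun k => sFun (rFun^[k] (simplexMid p q)))
    (fun k j => (sFun (rFun^[k] p) j + sFun (rFun^[k] q) j)/2)
    (fun k => sFun_dy _)
    (fun k => IsDy_mid (sFun_dy _) (sFun_dy _))
    (fun k j => (rFun^[k] (simplexMid p q)).1 j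
      - ((rFun^[k] p).1 j + (rFun^[k] q).1 j)/2)
    (fun j => by
      show (simplexMid p q).1 j - (p.1 j + q.1 j)/2 = 0
      show (p.1 j + q.1 j)/2 - (p.1 j + q.1 j)/2 = 0
      ring)
    (fun k j => by
      show (rFun^[k+1] (simplexMid p q)).1 j
          - ((rFun^[k+1] p).1 j + (rFun^[k+1] q).1 j)/2
        = 2 * ((rFun^[k] (simplexMid p q)).1 j
            - ((rFun^[k] p).1 j + (rFun^[k] q).1 j)/2)
          + ((sFun (rFun^[k] p) j + sFun (rFun^[k] q) j)/2
            - sFun (rFun^[k] (simplexMid p q)) j)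
      rw [rFun_iter_succ, rFun_iter_succ, rFun_iter_succ]
      ring)
    (fun k => ⟨(rFun^[k] (simplexMid p q)).1,
      (simplexMid (rFun^[k] p) (rFun^[k] q)).1,
      (rFun^[k] (simplexMid p q)).2,
      (simplexMid (rFun^[k] p) (rFun^[k] q)).2,
      fun j => rfl⟩)

lemma hom_dyadic (hm : IsMidpoint m) (g : stdSimplex ℝ (Fin (n+1)) → A)
    (hg : ∀ p q, g (simplexMid p q) = m (g p) (g q))
    (hgv : ∀ i, g (simplexVertex i) = f i) :
    ∀ L (w : Fin (n+1) → ℕ), (∑ i, w i) = 2^L →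
      ∀ (x : stdSimplex ℝ (Fin (n+1))), (∀ i, x.1 i = (w i : ℝ)/2^L) →
      g x = Ey m f L w := by
  intro L
  induction L with
  | zero =>
    intro w hw x hx
    rw [pow_zero] at hw
    obtain ⟨i0, hi0⟩ : ∃ i, 1 ≤ w i := by
      by_contra hno
      push_neg at hno
      have hz : ∀ i ∈ Finset.univ, w i = 0 := fun i _ => by have := hno i; omega
      rw [Finset.sum_eq_zero hz] at hw
      omega
    have hw' := eq_single_of w i0 hw hi0
    have hxv : x = simplexVertex i0 := by
      apply Subtype.ext
      funext j
      show x.1 j = (if j = i0 then (1:ℝ) else 0)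
      rw [hx j, congrFun hw' j]
      split_ifs <;> simp
    rw [hxv, hgv i0, hw', Ey_single]
  | succ L ih =>
    intro w hw x hx
    have hone : 1 ≤ (2:ℕ)^L := Nat.one_le_two_pow
    have hp2 : (2:ℕ)^(L+1) = 2^L + 2^L := by ring
    have hcle := takeW_le w (2^L)
    have hsc : (∑ i, takeW w (2^L) i) = 2^L := by
      rw [takeW_sum, hw]
      omega
    have hsd : (∑ i, (w i - takeW w (2^L) i)) = 2^L := by
      rw [Finset.sum_tsub_distrib Finset.univ (fun i _ => hcle i), hw, hsc]
      omega
    have hE : (0:ℝ) < 2^L := by positivity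
    set x1 : stdSimplex ℝ (Fin (n+1)) :=
      ⟨fun i => ((takeW w (2^L) i : ℕ) : ℝ)/2^L,
        IsDy_mem ⟨(L, takeW w (2^L)), hsc, fun i => rfl⟩⟩ with hx1
    set x2 : stdSimplex ℝ (Fin (n+1)) :=
      ⟨fun i => ((w i - takeW w (2^L) i : ℕ) : ℝ)/2^L,
        IsDy_mem ⟨(L, fun i => w i - takeW w (2^L) i), hsd, fun i => rfl⟩⟩ with hx2
    have hxm : x = simplexMid x1 x2 := by
      apply Subtype.ext
      funext i
      show x.1 i
        = (((takeW w (2^L) i : ℕ) : ℝ)/2^L + ((w i - takeW w (2^L) i : ℕ) : ℝ)/2^L)/2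
      rw [hx i, Nat.cast_sub (hcle i)]
      rw [← add_div, pow_succ, div_div]
      congr 1
      ring
    rw [hxm, hg x1 x2, ih (takeW w (2^L)) hsc x1 (fun i => rfl),
      ih (fun i => w i - takeW w (2^L) i) hsd x2 (fun i => rfl)]
    rfl

lemma hFun_unique (hm : IsMidpoint m) (hc : Cancellative m) (hit : Iterative m)
    (g : stdSimplex ℝ (Fin (n+1)) → A)
    (hg : ∀ p q, g (simplexMid p q) = m (g p) (g q))
    (hgv : ∀ i, g (simplexVertex i) = f i) :
    g = hFun m f hit := by
  apply sol_unique m hit (X := stdSimplex ℝ (Fin (n+1)))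
    (fun x => (Phi m f (sFun x), rFun x))
  · intro x
    show g x = m (Phi m f (sFun x)) (g (rFun x))
    have h1 : g (sPt x) = Phi m f (sFun x) := by
      rw [hom_dyadic m f hm g hg hgv (expN n) (swn x) (swn_sum x) (sPt x) (fun i => rfl),
        ← Phi_spec m f hm (q := sFun x) (swn_sum x) (fun i => rfl)]
    calc g x = g (simplexMid (sPt x) (rFun x)) := by rw [← p_eq_mid]
      _ = m (g (sPt x)) (g (rFun x)) := hg _ _
      _ = m (Phi m f (sFun x)) (g (rFun x)) := by rw [h1]
  · intro x
    exact hFun_eq m f hit x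

lemma simplexMid_isMidpoint : IsMidpoint (simplexMid (n := n)) := by
  refine ⟨?_, ?_, ?_⟩
  · intro x
    apply Subtype.ext
    funext i
    show (x.1 i + x.1 i)/2 = x.1 i
    ring
  · intro x y
    apply Subtype.ext
    funext i
    show (x.1 i + y.1 i)/2 = (y.1 i + x.1 i)/2
    ring
  · intro x y z w
    apply Subtype.ext
    funext i
    show ((x.1 i + y.1 i)/2 + (z.1 i + w.1 i)/2)/2
      = ((x.1 i + z.1 i)/2 + (y.1 i + w.1 i)/2)/2
    ring

lemma simplexMid_cancel : Cancellative (simplexMid (n := n)) := by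
  intro x y z h
  apply Subtype.ext
  funext i
  have h2 : (x.1 i + y.1 i)/2 = (x.1 i + z.1 i)/2 :=
    congrFun (congrArg Subtype.val h) i
  linarith

lemma simplexMid_iterative : Iterative (simplexMid (n := n)) := by
  intro X c
  set dd : X → ℕ → stdSimplex ℝ (Fin (n+1)) :=
    fun x k => (c ((fun y => (c y).2)^[k] x)).1 with hdd
  have sg : Summable (fun k : ℕ => (1/2:ℝ)^(k+1)) := by
    refine (summable_geometric_two.mul_left (1/2:ℝ)).congr fun k => ?_
    rw [pow_succ]
    ring
  have hsumm : ∀ (x : X) (i : Fin (n+1)), Summable (fun k => (dd x k).1 i / 2^(k+1)) := by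
    intro x i
    refine Summable.of_nonneg_of_le
      (fun k => div_nonneg ((dd x k).2.1 i) (by positivity)) (fun k => ?_) sg
    have h1 : (dd x k).1 i ≤ 1 := simplex_coord_le_one _ i
    have h2 : (0:ℝ) < 2^(k+1) := by positivity
    have h3 : (1/2:ℝ)^(k+1) = 1/2^(k+1) := by
      rw [one_div_pow]
    rw [h3]
    gcongr
  set u : X → stdSimplex ℝ (Fin (n+1)) := fun x =>
    ⟨fun i => ∑' k, (dd x k).1 i / 2^(k+1), by
      constructor
      · intro i
        exact tsum_nonneg (fun k => div_nonneg ((dd x k).2.1 i) (by positivity))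
      · rw [← Summable.tsum_finsetSum (fun i _ => hsumm x i)]
        have h1 : ∀ k, (∑ i, (dd x k).1 i / 2^(k+1)) = 1/2^(k+1) := by
          intro k
          rw [← Finset.sum_div, (dd x k).2.2]
        rw [tsum_congr h1]
        have h3 : (fun k : ℕ => (1:ℝ)/2^(k+1)) = (fun k : ℕ => (1:ℝ)/2/2^k) := by
          funext k
          rw [pow_succ]
          ring
        rw [h3]
        exact tsum_geometric_two' 1⟩ with hu
  have hshift : ∀ (x : X) (k : ℕ), dd x (k+1) = dd ((c x).2) k := by
    intro x k
    show (c ((fun y => (c y).2)^[k+1] x)).1 = (c ((fun y => (c y).2)^[k] ((c x).2))).1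
    rw [Function.iterate_succ_apply]
  have hufix : ∀ x, u x = simplexMid (c x).1 (u (c x).2) := by
    intro x
    apply Subtype.ext
    funext i
    show (∑' k, (dd x k).1 i / 2^(k+1))
      = (((c x).1).1 i + ∑' k, (dd ((c x).2) k).1 i / 2^(k+1))/2
    rw [Summable.tsum_eq_zero_add (hsumm x i)]
    have h2 : (∑' k, (dd x (k+1)).1 i / 2^(k+1+1))
        = (∑' k, (dd ((c x).2) k).1 i / 2^(k+1)) * (1/2) := by
      have h3 : ∀ k, (dd x (k+1)).1 i / 2^(k+1+1)
          = ((dd ((c x).2) k).1 i / 2^(k+1)) * (1/2) := by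
        intro k
        rw [hshift x k, pow_succ]
        ring
      rw [tsum_congr h3, tsum_mul_right]
    rw [h2]
    have h0 : dd x 0 = (c x).1 := rfl
    rw [h0]
    ring
  refine ⟨u, hufix, ?_⟩
  intro v hv
  have key : ∀ (K : ℕ) (x : X) (i : Fin (n+1)), |(v x).1 i - (u x).1 i| ≤ (1/2)^K := by
    intro K
    induction K with
    | zero =>
      intro x i
      have h1 : (v x).1 i ≤ 1 := simplex_coord_le_one _ i
      have h2 : 0 ≤ (v x).1 i := (v x).2.1 i
      have h3 : (u x).1 i ≤ 1 := simplex_coord_le_one _ i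
      have h4 : 0 ≤ (u x).1 i := (u x).2.1 i
      rw [pow_zero, abs_le]
      constructor <;> linarith
    | succ K ih =>
      intro x i
      have hv1 : (v x).1 i = (((c x).1).1 i + (v (c x).2).1 i)/2 :=
        congrFun (congrArg Subtype.val (hv x)) i
      have hu1 : (u x).1 i = (((c x).1).1 i + (u (c x).2).1 i)/2 :=
        congrFun (congrArg Subtype.val (hufix x)) i
      have h3 := ih (c x).2 i
      have h4 : (v x).1 i - (u x).1 i = ((v (c x).2).1 i - (u (c x).2).1 i)/2 := by
        rw [hv1, hu1]
        ring
      calc |(v x).1 i - (u x).1 i| = |(v (c x).2).1 i - (u (c x).2).1 i|/2 := by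
            rw [h4, abs_div, abs_two]
        _ ≤ (1/2)^K/2 := by linarith
        _ = (1/2)^(K+1) := by rw [pow_succ]; ring
  funext x
  apply Subtype.ext
  funext i
  by_contra hne
  have habs : 0 < |(v x).1 i - (u x).1 i| := abs_pos.2 (sub_ne_zero.2 hne)
  obtain ⟨K, hK⟩ := exists_pow_lt_of_lt_one habs (by norm_num : (1/2:ℝ) < 1)
  exact absurd (key K x i) (not_le.2 hK)

end Dev

/-- The standard `n`-simplex with the pointwise midpoint operation is the
midpoint-convex body freely generated by the `(n+1)`-element set. -/
theorem simplex_free_mconvex_body (n : ℕ) :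
    IsMidpoint (simplexMid (n := n)) ∧ Cancellative (simplexMid (n := n)) ∧
    Iterative (simplexMid (n := n)) ∧
    ∀ (A : Type) (m : A → A → A), IsMidpoint m → Cancellative m → Iterative m →
      ∀ f : Fin (n + 1) → A, ∃! h : stdSimplex ℝ (Fin (n + 1)) → A,
        (∀ p q, h (simplexMid p q) = m (h p) (h q)) ∧
        ∀ i, h (simplexVertex i) = f i := by
  refine ⟨simplexMid_isMidpoint, simplexMid_cancel, simplexMid_iterative, ?_⟩
  intro A m hm hc hit f
  refine ⟨hFun m f hit, ⟨hFun_mid m f hm hc hit, hFun_vertex m f hm hc hit⟩, ?_⟩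
  intro g hg
  exact hFun_unique m f hm hc hit g hg.1 hg.2
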